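/- For every natural number n and every sequence of polynomials F' : ℕ → ℤ[q] satisfying F'(0) = 0, F'(1) = 1, and F'(k+2) = F'(k+1) + q^{k}·F'(k) for all k (a second q-deformation of the Fibonacci numbers), the modified q-Euler characteristic for N = 5 with partition 5 = 2 + 3 and Rogers–Ramanujan exponents equals F'(2n+1); explicitly, as polynomials in ℤ[q]: Σ_{i∈ℤ} (−1)^i · q^{(5i² − i)/2} · [2n choose c(i)]_q = F'(2n+1), where the column function is c(2j) = n + 5j and c(2j + 1) = n + 2 + 5j for j ∈ ℤ. -/

import Mathlib

open Polynomial Function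

/-- The Gaussian binomial coefficient `[n choose k]_q` as a polynomial in `ℤ[q]`:
the sum over `k`-element subsets `S` of `{0, 1, …, n−1}` of
`q^((Σ_{s∈S} s) − k(k−1)/2)`. -/
noncomputable def gaussBinom (n k : ℕ) : Polynomial ℤ :=
  ∑ S ∈ (Finset.range n).powersetCard k, X ^ ((∑ s ∈ S, s) - k * (k - 1) / 2)

/-- The Gaussian binomial coefficient with an integer lower index, equal to `0`
when `j < 0` or `j > n`. -/
noncomputable def gaussBinomZ (n : ℕ) (j : ℤ) : Polynomial ℤ :=
  if 0 ≤ j then gaussBinom n j.toNat else 0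

/-- The column function `c`: `c(2j) = n + r·j` and `c(2j + 1) = n + off + r·j`. -/
def colFun (n : ℕ) (r off : ℤ) (i : ℤ) : ℤ :=
  if Even i then (n : ℤ) + r * (i / 2) else (n : ℤ) + off + r * ((i - 1) / 2)

lemma tri (k : ℕ) : (k+1)*k/2 = k*(k-1)/2 + k := by
  have h1 := Finset.sum_range_id (k+1)
  have h2 := Finset.sum_range_id k
  simp only [Nat.add_sub_cancel] at h1
  rw [Finset.sum_range_succ, h2] at h1
  omega

lemma min_sum : ∀ (k : ℕ) (S : Finset ℕ), S.card = k → k*(k-1)/2 ≤ ∑ s ∈ S, s := by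
  intro k
  induction k with
  | zero => intro S _; simp
  | succ k ih =>
    intro S hS
    have hne : S.Nonempty := Finset.card_pos.mp (by omega)
    set M := S.max' hne with hM
    have hmem : M ∈ S := S.max'_mem hne
    have hsub : S ⊆ Finset.range (M+1) := by
      intro x hx
      simp only [Finset.mem_range]
      exact Nat.lt_succ_of_le (S.le_max' x hx)
    have hcard : k + 1 ≤ M + 1 := by
      have := Finset.card_le_card hsub
      rw [Finset.card_range] at this; omega
    have herase : (S.erase M).card = k := by
      rw [Finset.card_erase_of_mem hmem, hS]
      omega
    have hih := ih _ herase
    have hsum := Finset.sum_erase_add S id hmem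
    simp only [id] at hsum
    have htri := tri k
    simp only [Nat.add_sub_cancel]
    omega

lemma gaussBinom_zero_right (m : ℕ) : gaussBinom m 0 = 1 := by
  simp [gaussBinom]

lemma gaussBinom_self (m : ℕ) : gaussBinom m m = 1 := by
  have hps : (Finset.range m).powersetCard m = {Finset.range m} := by
    have := Finset.powersetCard_self (Finset.range m)
    rwa [Finset.card_range] at this
  unfold gaussBinom
  rw [hps, Finset.sum_singleton, Finset.sum_range_id]
  simp

lemma gaussBinom_eq_zero {m k : ℕ} (h : m < k) : gaussBinom m k = 0 := by
  unfold gaussBinom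
  rw [Finset.powersetCard_eq_empty.mpr (by rwa [Finset.card_range]), Finset.sum_empty]

lemma pascal1_nat (m k : ℕ) (hk : k ≤ m) :
    gaussBinom (m+1) (k+1) = gaussBinom m (k+1) + X^(m-k) * gaussBinom m k := by
  unfold gaussBinom
  rw [Finset.range_add_one, Finset.powersetCard_succ_insert Finset.notMem_range_self]
  rw [Finset.sum_union]
  · congr 1
    rw [Finset.sum_image]
    · rw [Finset.mul_sum]
      apply Finset.sum_congr rfl
      intro S hS
      rw [Finset.mem_powersetCard] at hS
      have hmS : m ∉ S := fun hm => Finset.notMem_range_self (hS.1 hm)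
      rw [Finset.sum_insert hmS, ← pow_add]
      congr 1
      have hmin := min_sum k S hS.2
      have htri := tri k
      simp only [Nat.add_sub_cancel]
      omega
    · intro S hS T hT hST
      rw [Finset.mem_coe, Finset.mem_powersetCard] at hS hT
      have hmS : m ∉ S := fun hm => Finset.notMem_range_self (hS.1 hm)
      have hmT : m ∉ T := fun hm => Finset.notMem_range_self (hT.1 hm)
      have := congrArg (Finset.erase · m) hST
      simpa [Finset.erase_insert, hmS, hmT] using this
  · rw [Finset.disjoint_left]
    intro S hS hS'
    rw [Finset.mem_powersetCard] at hS
    rw [Finset.mem_image] at hS'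
    obtain ⟨T, _, rfl⟩ := hS'
    exact Finset.notMem_range_self (hS.1 (Finset.mem_insert_self m T))

lemma gb_aux : ∀ m k : ℕ, k ≤ m →
    (1 - X^(k+1)) * gaussBinom m (k+1) = (1 - X^(m-k)) * gaussBinom m k := by
  intro m
  induction m with
  | zero =>
    intro k hk
    interval_cases k
    simp [gaussBinom_eq_zero (by norm_num : 0 < 1)]
  | succ m ih =>
    intro k hk
    rcases Nat.lt_or_ge k (m+1) with hkm | hkm
    · have hk' : k ≤ m := by omega
      rw [pascal1_nat m k hk']
      rcases Nat.eq_zero_or_pos k with rfl | hkpos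
      · have h0 := ih 0 (Nat.zero_le m)
        rw [gaussBinom_zero_right] at h0 ⊢
        rw [gaussBinom_zero_right]
        simp only [Nat.sub_zero] at h0 ⊢
        linear_combination h0
      · obtain ⟨k', rfl⟩ : ∃ k', k = k' + 1 := ⟨k - 1, by omega⟩
        have hk'' : k' ≤ m := by omega
        have h1 := ih (k'+1) hk'
        have h2 := ih k' hk''
        have hp := pascal1_nat m k' hk''
        have e1 : m + 1 - (k' + 1) = (m - (k'+1)) + 1 := by omega
        have e2 : m - k' = (m - (k'+1)) + 1 := by omega
        rw [e2] at h2 hp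
        rw [e1, hp]
        linear_combination h1 + X^((m - (k'+1)) + 1) * h2
    · have : k = m + 1 := by omega
      subst this
      rw [gaussBinom_eq_zero (by omega : m + 1 < m + 1 + 1), Nat.sub_self]
      simp

lemma pascal2_nat (m k : ℕ) (hk : k ≤ m) :
    gaussBinom (m+1) (k+1) = X^(k+1) * gaussBinom m (k+1) + gaussBinom m k := by
  have h := gb_aux m k hk
  have hp := pascal1_nat m k hk
  linear_combination hp + h

lemma GZ_neg {M : ℕ} {k : ℤ} (h : k < 0) : gaussBinomZ M k = 0 := by
  simp [gaussBinomZ, not_le.mpr h]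

lemma GZ_big {M : ℕ} {k : ℤ} (h : (M:ℤ) < k) : gaussBinomZ M k = 0 := by
  have h0 : (0:ℤ) ≤ k := le_of_lt (lt_of_le_of_lt (Int.ofNat_nonneg M) h)
  rw [gaussBinomZ, if_pos h0]
  exact gaussBinom_eq_zero (by omega)

lemma GZ_out {M : ℕ} {k : ℤ} (h : ¬ (0 ≤ k ∧ k ≤ (M:ℤ))) : gaussBinomZ M k = 0 := by
  rcases not_and_or.mp h with h' | h'
  · exact GZ_neg (by omega)
  · exact GZ_big (by omega)

lemma GZ_nat (M : ℕ) (K : ℕ) : gaussBinomZ M (K : ℤ) = gaussBinom M K := by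
  simp [gaussBinomZ]

lemma pascalZ1 (M : ℕ) (k : ℤ) :
    gaussBinomZ (M+1) k = gaussBinomZ M k + X^((M+1-k).toNat) * gaussBinomZ M (k-1) := by
  rcases lt_or_ge k 0 with hneg | hkn
  · rw [GZ_neg hneg, GZ_neg hneg, GZ_neg (by omega : k - 1 < 0)]; ring
  rcases lt_or_ge ((M:ℤ)+1) k with hbig | hle
  · rw [GZ_big (by omega : ((M+1:ℕ):ℤ) < k), GZ_big (by omega : (M:ℤ) < k),
      GZ_big (by omega : (M:ℤ) < k - 1)]; ring
  -- 0 ≤ k ≤ M+1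
  obtain ⟨K, rfl⟩ : ∃ K : ℕ, k = (K:ℤ) := ⟨k.toNat, by omega⟩
  rcases Nat.eq_zero_or_pos K with rfl | hKpos
  · rw [GZ_neg (k := ((0:ℕ):ℤ) - 1) (by norm_num)]
    rw [GZ_nat, GZ_nat, gaussBinom_zero_right, gaussBinom_zero_right]
    ring
  · obtain ⟨K', rfl⟩ : ∃ K', K = K' + 1 := ⟨K - 1, by omega⟩
    have hK'M : K' ≤ M := by omega
    push_cast
    rw [show ((K':ℤ) + 1 - 1) = (((K':ℕ)):ℤ) by ring, GZ_nat]
    rw [show ((K':ℤ) + 1) = (((K'+1:ℕ)):ℤ) by push_cast; ring, GZ_nat]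
    rw [show ((M:ℤ) + 1 - ((K'+1:ℕ):ℤ)).toNat = M - K' by push_cast; omega]
    exact pascal1_nat M K' hK'M

lemma pascalZ2 (M : ℕ) (k : ℤ) :
    gaussBinomZ (M+1) k = X^(k.toNat) * gaussBinomZ M k + gaussBinomZ M (k-1) := by
  rcases lt_or_ge k 0 with hneg | hkn
  · rw [GZ_neg hneg, GZ_neg hneg, GZ_neg (by omega : k - 1 < 0)]; ring
  rcases lt_or_ge ((M:ℤ)+1) k with hbig | hle
  · rw [GZ_big (by omega : ((M+1:ℕ):ℤ) < k), GZ_big (by omega : (M:ℤ) < k),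
      GZ_big (by omega : (M:ℤ) < k - 1)]; ring
  obtain ⟨K, rfl⟩ : ∃ K : ℕ, k = (K:ℤ) := ⟨k.toNat, by omega⟩
  rcases Nat.eq_zero_or_pos K with rfl | hKpos
  · rw [GZ_neg (k := ((0:ℕ):ℤ) - 1) (by norm_num)]
    rw [GZ_nat, GZ_nat, gaussBinom_zero_right, gaussBinom_zero_right]
    simp
  · obtain ⟨K', rfl⟩ : ∃ K', K = K' + 1 := ⟨K - 1, by omega⟩
    rcases Nat.lt_or_ge K' M with hK'M | hK'M
    · push_cast
      rw [show ((K':ℤ) + 1 - 1) = (((K':ℕ)):ℤ) by ring, GZ_nat]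
      rw [show ((K':ℤ) + 1) = (((K'+1:ℕ)):ℤ) by push_cast; ring, GZ_nat, GZ_nat]
      rw [show (((K'+1:ℕ):ℤ)).toNat = K' + 1 by omega]
      exact pascal2_nat M K' (by omega)
    · have hKM : M ≤ K' := hK'M
      rcases Nat.lt_or_ge M K' with hlt | hge
      · exfalso; omega
      have : K' = M := by omega
      subst this
      push_cast
      rw [show ((K':ℤ) + 1 - 1) = ((K':ℕ):ℤ) by push_cast; ring, GZ_nat]
      rw [show ((K':ℤ) + 1) = (((K'+1:ℕ)):ℤ) by push_cast; ring, GZ_nat, GZ_nat]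
      rw [show (((K'+1:ℕ):ℤ)).toNat = K'+1 by omega]
      rw [gaussBinom_self, gaussBinom_self, gaussBinom_eq_zero (by omega : K' < K' + 1)]
      ring

lemma pow_G_congr (M : ℕ) (k : ℤ) {s t : ℕ} (h : 0 ≤ k → k ≤ (M:ℤ) → s = t) :
    (X : Polynomial ℤ)^s * gaussBinomZ M k = X^t * gaussBinomZ M k := by
  by_cases h0 : 0 ≤ k ∧ k ≤ (M:ℤ)
  · rw [h h0.1 h0.2]
  · rw [GZ_out h0, mul_zero, mul_zero]

noncomputable def tA (n : ℕ) (j : ℤ) : Polynomial ℤ :=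
  X^((10*j^2 - j).toNat) * gaussBinomZ (2*n) ((n:ℤ) + 5*j)
  - X^((10*j^2 + 9*j + 2).toNat) * gaussBinomZ (2*n) ((n:ℤ) + 2 + 5*j)

noncomputable def tB (n : ℕ) (j : ℤ) : Polynomial ℤ :=
  X^((10*j^2 - j).toNat) * gaussBinomZ (2*n+1) ((n:ℤ) + 5*j)
  - X^((10*j^2 + 9*j + 2).toNat) * gaussBinomZ (2*n+1) ((n:ℤ) + 3 + 5*j)

noncomputable def hT (n : ℕ) (j : ℤ) : Polynomial ℤ :=
  X^((10*j^2 - 6*j + (n:ℤ) + 2).toNat) * gaussBinomZ (2*n+1) ((n:ℤ) - 1 + 5*j)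

lemma e0_nonneg (j : ℤ) : 0 ≤ 10*j^2 - j := by nlinarith [sq_nonneg j, sq_nonneg (j-1)]

lemma e1_nonneg (j : ℤ) : 0 ≤ 10*j^2 + 9*j + 2 := by
  rcases le_or_gt 0 j with h | h <;> nlinarith [sq_nonneg j, sq_nonneg (j+1)]

lemma e2_nonneg (j : ℤ) : 0 ≤ 10*j^2 - 6*j := by
  rcases lt_trichotomy j 0 with h | rfl | h
  · nlinarith [sq_nonneg j]
  · norm_num
  · have h1 : 1 ≤ j := h
    nlinarith [mul_le_mul_of_nonneg_left h1 (by linarith : (0:ℤ) ≤ j)]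

lemma key2 (n : ℕ) (j : ℤ) : tA (n+1) j = tB n j + X^(2*n+1) * tA n j := by
  unfold tA tB
  push_cast
  rw [show 2*(n+1) = (2*n+1)+1 by ring]
  rw [show (n:ℤ)+1+2+5*j = (n:ℤ)+3+5*j by ring]
  have h1 := pascalZ2 (2*n+1) ((n:ℤ)+1+5*j)
  have h2 := pascalZ1 (2*n+1) ((n:ℤ)+3+5*j)
  have h3 := pascalZ1 (2*n) ((n:ℤ)+1+5*j)
  have h4 := pascalZ2 (2*n) ((n:ℤ)+3+5*j-1)
  rw [show (n:ℤ)+1+5*j-1 = (n:ℤ)+5*j by ring] at h1 h3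
  rw [show (n:ℤ)+3+5*j-1 = (n:ℤ)+2+5*j by ring] at h2 h4
  rw [show (n:ℤ)+2+5*j-1 = (n:ℤ)+1+5*j by ring] at h4
  rw [show (2*n+1:ℕ) = 2*n+1 from rfl] at h1 h2
  have he0 := e0_nonneg j
  have he1 := e1_nonneg j
  have hd : 10*j^2 + 9*j + 2 = (10*j^2 - j) + (10*j + 2) := by ring
  have ca := pow_G_congr (2*n) ((n:ℤ)+5*j)
    (s := (10*j^2 - j).toNat + (((n:ℤ)+1+5*j).toNat + ((2*n:ℕ) + 1 - ((n:ℤ)+1+5*j)).toNat))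
    (t := (2*n+1) + (10*j^2 - j).toNat)
    (fun hl hr => by omega)
  have cb := pow_G_congr (2*n) ((n:ℤ)+1+5*j)
    (s := (10*j^2 - j).toNat + ((n:ℤ)+1+5*j).toNat)
    (t := (10*j^2 + 9*j + 2).toNat + ((2*n+1:ℕ) + 1 - ((n:ℤ)+3+5*j)).toNat)
    (fun hl hr => by omega)
  have cc := pow_G_congr (2*n) ((n:ℤ)+2+5*j)
    (s := (10*j^2 + 9*j + 2).toNat + (((2*n+1:ℕ) + 1 - ((n:ℤ)+3+5*j)).toNat + ((n:ℤ)+2+5*j).toNat))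
    (t := (2*n+1) + (10*j^2 + 9*j + 2).toNat)
    (fun hl hr => by omega)
  rw [h1, h2, h3, h4]
  linear_combination ca + cb - cc

lemma key1 (n : ℕ) (j : ℤ) :
    tB (n+1) j = tA (n+1) j + X^(2*n+2) * tB n j + (hT n j - hT n (j+1)) := by
  unfold tA tB hT
  push_cast
  rw [show 2*(n+1) = 2*n+2 by ring]
  rw [show (n:ℤ)+1+3+5*j = (n:ℤ)+4+5*j by ring]
  rw [show (n:ℤ)+1+2+5*j = (n:ℤ)+3+5*j by ring]
  rw [show (n:ℤ)-1+5*(j+1) = (n:ℤ)+4+5*j by ring]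
  rw [show 10*(j+1)^2 - 6*(j+1) + (n:ℤ) + 2 = 10*j^2+14*j+(n:ℤ)+6 by ring]
  have h1 := pascalZ1 (2*n+2) ((n:ℤ)+1+5*j)
  have h2 := pascalZ2 (2*n+2) ((n:ℤ)+4+5*j)
  have h3 := pascalZ2 (2*n+1) ((n:ℤ)+5*j)
  have h4 := pascalZ1 (2*n+1) ((n:ℤ)+4+5*j)
  rw [show (n:ℤ)+1+5*j-1 = (n:ℤ)+5*j by ring] at h1
  rw [show (n:ℤ)+4+5*j-1 = (n:ℤ)+3+5*j by ring] at h2 h4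
  rw [show (n:ℤ)+5*j-1 = (n:ℤ)-1+5*j by ring] at h3
  rw [show 2*n+1+1 = 2*n+2 by omega] at h3 h4
  have he0 := e0_nonneg j
  have he1 := e1_nonneg j
  have he2 := e2_nonneg j
  have cd := pow_G_congr (2*n+1) ((n:ℤ)+5*j)
    (s := (10*j^2 - j).toNat + (((2*n+2:ℕ) + 1 - ((n:ℤ)+1+5*j)).toNat + ((n:ℤ)+5*j).toNat))
    (t := (2*n+2) + (10*j^2 - j).toNat)
    (fun hl hr => by omega)
  have ce := pow_G_congr (2*n+1) ((n:ℤ)-1+5*j)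
    (s := (10*j^2 - j).toNat + ((2*n+2:ℕ) + 1 - ((n:ℤ)+1+5*j)).toNat)
    (t := (10*j^2 - 6*j + (n:ℤ) + 2).toNat)
    (fun hl hr => by omega)
  have ch := pow_G_congr (2*n+1) ((n:ℤ)+4+5*j)
    (s := (10*j^2 + 9*j + 2).toNat + ((n:ℤ)+4+5*j).toNat)
    (t := (10*j^2+14*j+(n:ℤ)+6).toNat)
    (fun hl hr => by omega)
  have cz := pow_G_congr (2*n+1) ((n:ℤ)+3+5*j)
    (s := (10*j^2 + 9*j + 2).toNat + (((n:ℤ)+4+5*j).toNat + ((2*n+1:ℕ) + 1 - ((n:ℤ)+4+5*j)).toNat))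
    (t := (2*n+2) + (10*j^2 + 9*j + 2).toNat)
    (fun hl hr => by omega)
  rw [h1, h2, h3, h4]
  linear_combination cd + ce - ch - cz

lemma supp_fin {φ : ℤ → Polynomial ℤ} (a b : ℤ) (h : ∀ j, φ j ≠ 0 → a ≤ j ∧ j ≤ b) :
    (support φ).Finite :=
  (Set.finite_Icc a b).subset (fun j hj => Set.mem_Icc.mpr (h j hj))

lemma tA_bound (n : ℕ) : ∀ j, tA n j ≠ 0 → -(n:ℤ)-2 ≤ j ∧ j ≤ (n:ℤ) := by
  intro j hj
  by_contra hc
  push_neg at hc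
  apply hj
  unfold tA
  have hor : j < -(n:ℤ)-2 ∨ (n:ℤ) < j := by
    rcases lt_or_ge j (-(n:ℤ)-2) with h | h
    exacts [Or.inl h, Or.inr (hc h)]
  rw [GZ_out (by omega), GZ_out (by omega)]
  ring

lemma tB_bound (n : ℕ) : ∀ j, tB n j ≠ 0 → -(n:ℤ)-3 ≤ j ∧ j ≤ (n:ℤ)+1 := by
  intro j hj
  by_contra hc
  push_neg at hc
  apply hj
  unfold tB
  have hor : j < -(n:ℤ)-3 ∨ (n:ℤ)+1 < j := by
    rcases lt_or_ge j (-(n:ℤ)-3) with h | h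
    exacts [Or.inl h, Or.inr (hc h)]
  rw [GZ_out (by omega), GZ_out (by omega)]
  ring

lemma hT_bound (n : ℕ) : ∀ j, hT n j ≠ 0 → -(n:ℤ) ≤ j ∧ j ≤ (n:ℤ)+1 := by
  intro j hj
  by_contra hc
  push_neg at hc
  apply hj
  unfold hT
  have hor : j < -(n:ℤ) ∨ (n:ℤ)+1 < j := by
    rcases lt_or_ge j (-(n:ℤ)) with h | h
    exacts [Or.inl h, Or.inr (hc h)]
  rw [GZ_out (by omega)]
  ring

lemma tA_fin (n : ℕ) : (support (tA n)).Finite := supp_fin _ _ (tA_bound n)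

lemma tB_fin (n : ℕ) : (support (tB n)).Finite := supp_fin _ _ (tB_bound n)

lemma hT_fin (n : ℕ) : (support (hT n)).Finite := supp_fin _ _ (hT_bound n)

lemma shift_fin {φ : ℤ → Polynomial ℤ} (h : (support φ).Finite) :
    (support (fun j => φ (j+1))).Finite := by
  rw [show (fun j : ℤ => φ (j+1)) = φ ∘ (fun j => j+1) from rfl,
    Function.support_comp_eq_preimage]
  exact h.preimage (Set.injOn_of_injective (fun a b hab => by omega))

lemma scaled_fin (c : ℕ) {φ : ℤ → Polynomial ℤ} (h : (support φ).Finite) :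
    (support (fun j => (X:Polynomial ℤ)^c * φ j)).Finite :=
  h.subset (fun j hj => by
    simp only [mem_support] at hj ⊢
    intro h0; apply hj; rw [h0, mul_zero])

lemma shift_finsum (φ : ℤ → Polynomial ℤ) : ∑ᶠ j, φ (j+1) = ∑ᶠ j, φ j := by
  have := finsum_comp_equiv (Equiv.addRight (1:ℤ)) (f := φ)
  simpa using this

lemma telesc (n : ℕ) : ∑ᶠ j, (hT n j - hT n (j+1)) = 0 := by
  rw [finsum_sub_distrib (hT_fin n) (shift_fin (hT_fin n))]
  rw [shift_finsum (hT n), sub_self]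

lemma AB (F' : ℕ → Polynomial ℤ) (hF0 : F' 0 = 0) (hF1 : F' 1 = 1)
    (hFrec : ∀ k, F' (k + 2) = F' (k + 1) + X ^ k * F' k) :
    ∀ n : ℕ, (∑ᶠ j, tA n j) = F' (2*n+1) ∧ (∑ᶠ j, tB n j) = F' (2*n+2) := by
  intro n
  induction n with
  | zero =>
    constructor
    · rw [finsum_eq_single (tA 0) 0 (fun j hj => by
        unfold tA
        rw [GZ_out (by omega), GZ_out (by omega)]
        ring)]
      have h1 : gaussBinomZ (2*0) (((0:ℕ):ℤ) + 5*0) = 1 := by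
        norm_num [gaussBinomZ, gaussBinom_zero_right]
      have h2 : gaussBinomZ (2*0) (((0:ℕ):ℤ) + 2 + 5*0) = 0 := GZ_out (by norm_num)
      unfold tA
      rw [h1, h2]
      norm_num [hF1]
    · rw [finsum_eq_single (tB 0) 0 (fun j hj => by
        unfold tB
        rw [GZ_out (by omega), GZ_out (by omega)]
        ring)]
      have h1 : gaussBinomZ (2*0+1) (((0:ℕ):ℤ) + 5*0) = 1 := by
        norm_num [gaussBinomZ, gaussBinom_zero_right]
      have h2 : gaussBinomZ (2*0+1) (((0:ℕ):ℤ) + 3 + 5*0) = 0 := GZ_out (by norm_num)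
      have h3 := hFrec 0
      rw [hF0, hF1] at h3
      unfold tB
      rw [h1, h2]
      norm_num [h3]
  | succ n ih =>
    have hA : (∑ᶠ j, tA (n+1) j) = F' (2*(n+1)+1) := by
      rw [finsum_congr (key2 n)]
      rw [finsum_add_distrib (tB_fin n) (scaled_fin (2*n+1) (tA_fin n))]
      rw [← mul_finsum (tA n) _]
      rw [ih.1, ih.2]
      rw [show 2*(n+1)+1 = (2*n+1)+2 by ring, hFrec (2*n+1)]
    refine ⟨hA, ?_⟩
    rw [finsum_congr (key1 n)]
    rw [finsum_add_distrib (f := fun j => tA (n+1) j + X^(2*n+2) * tB n j)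
      (((tA_fin (n+1)).union (scaled_fin (2*n+2) (tB_fin n))).subset
        (support_add _ _))
      (((hT_fin n).union (shift_fin (hT_fin n))).subset (support_sub _ _))]
    rw [telesc n, add_zero]
    rw [finsum_add_distrib (tA_fin (n+1)) (scaled_fin (2*n+2) (tB_fin n))]
    rw [← mul_finsum (tB n) _]
    rw [hA, ih.2]
    rw [show 2*(n+1)+2 = (2*n+2)+2 by ring, hFrec (2*n+2),
      show 2*n+2+1 = 2*(n+1)+1 by ring]

lemma pair_split (φ : ℤ → Polynomial ℤ) (hφ : (support φ).Finite) :
    ∑ᶠ i : ℤ, φ i = ∑ᶠ j : ℤ, (φ (2*j) + φ (2*j+1)) := by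
  have hinj1 : Injective (fun j : ℤ => 2*j) := fun a b h => by
    have h' : 2*a = 2*b := h; omega
  have hinj2 : Injective (fun j : ℤ => 2*j+1) := fun a b h => by
    have h' : 2*a+1 = 2*b+1 := h; omega
  have hs1 : (support (fun j : ℤ => φ (2*j))).Finite := by
    rw [show (fun j : ℤ => φ (2*j)) = φ ∘ (fun j => 2*j) from rfl,
      support_comp_eq_preimage]
    exact hφ.preimage (Set.injOn_of_injective hinj1)
  have hs2 : (support (fun j : ℤ => φ (2*j+1))).Finite := by
    rw [show (fun j : ℤ => φ (2*j+1)) = φ ∘ (fun j => 2*j+1) from rfl,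
      support_comp_eq_preimage]
    exact hφ.preimage (Set.injOn_of_injective hinj2)
  have hdisj : Disjoint (Set.range fun j : ℤ => 2*j) (Set.range fun j : ℤ => 2*j+1) := by
    rw [Set.disjoint_left]
    rintro x ⟨a, ha⟩ ⟨b, hb⟩
    have h1 : 2*a = x := ha
    have h2 : 2*b+1 = x := hb
    omega
  have huniv : (Set.range fun j : ℤ => 2*j) ∪ (Set.range fun j : ℤ => 2*j+1) = Set.univ := by
    ext i
    simp only [Set.mem_union, Set.mem_range, Set.mem_univ, iff_true]
    rcases Int.even_or_odd i with ⟨k, hk⟩ | ⟨k, hk⟩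
    exacts [Or.inl ⟨k, by omega⟩, Or.inr ⟨k, by omega⟩]
  rw [finsum_add_distrib hs1 hs2, ← finsum_mem_range hinj1 (f := φ),
    ← finsum_mem_range hinj2 (f := φ),
    ← finsum_mem_union' hdisj (hφ.inter_of_right _) (hφ.inter_of_right _),
    huniv, finsum_mem_univ]


/-- The modified q-Euler characteristic for N = 5, partition 5 = 2 + 3, with the
second Rogers–Ramanujan exponents (5i² − i)/2 equals the q-Fibonacci polynomial
F'(2n+1), where F'(0) = 0, F'(1) = 1 and F'(k+2) = F'(k+1) + q^k·F'(k):
Σ_{i∈ℤ} (−1)^i · q^((5i² − i)/2) · [2n choose c(i)]_q = F'(2n+1),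
where c(2j) = n + 5j and c(2j + 1) = n + 2 + 5j. -/
theorem q_euler_char_N_five_partition_two_three (n : ℕ)
    (F' : ℕ → Polynomial ℤ) (hF0 : F' 0 = 0) (hF1 : F' 1 = 1)
    (hFrec : ∀ k, F' (k + 2) = F' (k + 1) + X ^ k * F' k) :
    ∑ᶠ i : ℤ, (C ((Int.negOnePow i : ℤˣ) : ℤ) *
      X ^ ((5 * i ^ 2 - i) / 2).toNat * gaussBinomZ (2 * n) (colFun n 5 2 i)) =
      F' (2 * n + 1) := by
  set φ : ℤ → Polynomial ℤ := fun i => C ((Int.negOnePow i : ℤˣ) : ℤ) *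
      X ^ ((5 * i ^ 2 - i) / 2).toNat * gaussBinomZ (2 * n) (colFun n 5 2 i) with hφdef
  have hbound : ∀ i, φ i ≠ 0 → -(2*(n:ℤ)+6) ≤ i ∧ i ≤ 2*(n:ℤ)+6 := by
    intro i hi
    by_contra hc
    push_neg at hc
    apply hi
    have hor : i < -(2*(n:ℤ)+6) ∨ 2*(n:ℤ)+6 < i := by
      rcases lt_or_ge i (-(2*(n:ℤ)+6)) with h | h
      exacts [Or.inl h, Or.inr (hc h)]
    rw [hφdef]
    simp only
    unfold colFun
    by_cases hev : Even i
    · rw [if_pos hev, GZ_out (by omega), mul_zero]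
    · rw [if_neg hev, GZ_out (by omega), mul_zero]
  have hpair : ∀ j : ℤ, φ (2*j) + φ (2*j+1) = tA n j := by
    intro j
    have hev : Even (2*j) := ⟨j, two_mul j⟩
    have hodd : ¬ Even (2*j+1) := by rw [Int.even_iff]; omega
    have hc1 : colFun n 5 2 (2*j) = (n:ℤ) + 5*j := by
      unfold colFun
      rw [if_pos hev, Int.mul_ediv_cancel_left j two_ne_zero]
    have hc2 : colFun n 5 2 (2*j+1) = (n:ℤ) + 2 + 5*j := by
      unfold colFun
      rw [if_neg hodd, show (2*j+1-1)/2 = j by omega]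
    have he1 : (5 * (2*j) ^ 2 - 2*j) / 2 = 10*j^2 - j := by
      rw [show 5 * (2*j)^2 - 2*j = (10*j^2 - j) * 2 by ring,
        Int.mul_ediv_cancel _ two_ne_zero]
    have he2 : (5 * (2*j+1) ^ 2 - (2*j+1)) / 2 = 10*j^2 + 9*j + 2 := by
      rw [show 5 * (2*j+1)^2 - (2*j+1) = (10*j^2 + 9*j + 2) * 2 by ring,
        Int.mul_ediv_cancel _ two_ne_zero]
    rw [hφdef]
    simp only
    rw [hc1, hc2, he1, he2, Int.negOnePow_two_mul, Int.negOnePow_two_mul_add_one]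
    unfold tA
    simp only [Units.val_one, Units.val_neg, C_1, map_neg]
    push_cast
    ring
  rw [pair_split φ (supp_fin _ _ hbound), finsum_congr hpair, (AB F' hF0 hF1 hFrec n).1]
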